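/- Let $a_1 < a_2 < \cdots < a_{n-1}$ be real numbers, let $c \in \mathbb{R}$, and let $b_i \ne 0$ for $1 \le i \le n-1$. Define the Pick function $f(\lambda) = \lambda - c + \sum_{i=1}^{n-1}\frac{b_i^2}{a_i - \lambda}$. Then $f$ has exactly $n$ real roots $\lambda_1 < \lambda_2 < \cdots < \lambda_n$ satisfying the strict interlacing $\lambda_1 < a_1 < \lambda_2 < a_2 < \cdots < a_{n-1} < \lambda_n$, and these roots are precisely the eigenvalues of the symmetric arrowhead matrix $A = \begin{pmatrix} D & b \\ b^\top & c\end{pmatrix}$ with $D = \mathrm{diag}(a_1,\ldots,a_{n-1})$ and $b = (b_1,\ldots,b_{n-1})^\top$. -/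

import Mathlib

open scoped Matrix

/-- The symmetric arrowhead matrix with shaft `a`, spike `b` and corner `c`. -/
noncomputable def arrowhead (m : ℕ) (a b : Fin m → ℝ) (c : ℝ) :
    Matrix (Fin (m + 1)) (Fin (m + 1)) ℝ :=
  Matrix.of fun i j =>
    if hi : (i : ℕ) < m then
      if hj : (j : ℕ) < m then (if i = j then a ⟨i, hi⟩ else 0) else b ⟨i, hi⟩
    else if hj : (j : ℕ) < m then b ⟨j, hj⟩ else c

namespace ArrowheadAux

open Finset Filter Topology Matrix Polynomial

variable {m : ℕ}




noncomputable def pick (a b : Fin m → ℝ) (c : ℝ) (μ : ℝ) : ℝ :=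
  μ - c + ∑ i, (b i) ^ 2 / (a i - μ)

def Sset (a : Fin m → ℝ) (k : Fin (m + 1)) : Set ℝ :=
  {x | (∀ i : Fin m, (i : ℕ) < (k : ℕ) → a i < x) ∧ (∀ i : Fin m, (k : ℕ) ≤ (i : ℕ) → x < a i)}

lemma ne_of_mem_Sset {a : Fin m → ℝ} {k} {x} (hx : x ∈ Sset a k) (i : Fin m) : a i ≠ x := by
  rcases lt_or_ge (i : ℕ) (k : ℕ) with h | h
  · exact ne_of_lt (hx.1 i h)
  · exact ne_of_gt (hx.2 i h)

lemma strictMonoOn_pick (a b : Fin m → ℝ) (c : ℝ) (k) :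
    StrictMonoOn (pick a b c) (Sset a k) := by
  intro x hx y hy hxy
  have hsum : ∀ i : Fin m, (b i) ^ 2 / (a i - x) ≤ (b i) ^ 2 / (a i - y) := by
    intro i
    have hprod : 0 < (a i - x) * (a i - y) := by
      rcases lt_or_ge (i : ℕ) (k : ℕ) with h | h
      · have h1 := hx.1 i h; have h2 := hy.1 i h
        exact mul_pos_of_neg_of_neg (by linarith) (by linarith)
      · have h1 := hx.2 i h; have h2 := hy.2 i h
        exact mul_pos (by linarith) (by linarith)
    have hxne : a i - x ≠ 0 := by
      intro h; rw [h, zero_mul] at hprod; exact lt_irrefl _ hprod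
    have hyne : a i - y ≠ 0 := by
      intro h; rw [h, mul_zero] at hprod; exact lt_irrefl _ hprod
    have key : (b i) ^ 2 / (a i - y) - (b i) ^ 2 / (a i - x)
        = (b i) ^ 2 * ((y - x) / ((a i - x) * (a i - y))) := by
      field_simp; ring
    have h0 : 0 ≤ (b i) ^ 2 * ((y - x) / ((a i - x) * (a i - y))) :=
      mul_nonneg (sq_nonneg _) (div_nonneg (by linarith) hprod.le)
    linarith [key ▸ h0]
  have hss : (∑ i, (b i) ^ 2 / (a i - x)) ≤ ∑ i, (b i) ^ 2 / (a i - y) :=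
    Finset.sum_le_sum (fun i _ => hsum i)
  unfold pick
  linarith

lemma continuousOn_pick (a b : Fin m → ℝ) (c : ℝ) :
    ContinuousOn (pick a b c) {x | ∀ i, a i ≠ x} := by
  unfold pick
  apply ContinuousOn.add
  · exact (continuous_id.sub continuous_const).continuousOn
  · apply continuousOn_finset_sum
    intro i _
    exact ContinuousOn.div continuousOn_const
      ((continuous_const.sub continuous_id).continuousOn)
      (fun x hx => sub_ne_zero.2 (hx i))







-- split of pick with one term taken out
lemma pick_eq_rest (a b : Fin m → ℝ) (c : ℝ) (j : Fin m) (μ : ℝ) :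
    pick a b c μ = (μ - c + ∑ i ∈ univ.erase j, (b i) ^ 2 / (a i - μ))
      + (b j) ^ 2 / (a j - μ) := by
  unfold pick
  rw [add_assoc, Finset.sum_erase_add _ _ (mem_univ j)]

lemma tendsto_rest (a b : Fin m → ℝ) (c : ℝ) (j : Fin m) (ha : Function.Injective a)
    (l : Filter ℝ) (hl : l ≤ 𝓝 (a j)) :
    Tendsto (fun μ => μ - c + ∑ i ∈ univ.erase j, (b i) ^ 2 / (a i - μ)) l
      (𝓝 ((a j) - c + ∑ i ∈ univ.erase j, (b i) ^ 2 / (a i - a j))) := by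
  apply Tendsto.mono_left _ hl
  apply Tendsto.add
  · simpa using ((continuous_sub_right c).tendsto (a j))
  · apply tendsto_finset_sum
    intro i hi
    apply Tendsto.div tendsto_const_nhds
      (by simpa using (continuous_sub_left (a i)).tendsto (a j))
    rw [sub_ne_zero]
    exact fun h => (Finset.mem_erase.1 hi).1 (ha h)

lemma tendsto_spike_right (a b : Fin m → ℝ) (j : Fin m) (hb : b j ≠ 0) :
    Tendsto (fun μ => (b j) ^ 2 / (a j - μ)) (𝓝[>] (a j)) atBot := by
  have h1 : Tendsto (fun μ => μ - a j) (𝓝[>] (a j)) (𝓝[>] 0) := by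
    apply tendsto_nhdsWithin_of_tendsto_nhds_of_eventually_within
    · have := (continuous_sub_right (a j)).tendsto (a j)
      simpa using this.mono_left nhdsWithin_le_nhds
    · filter_upwards [self_mem_nhdsWithin] with x hx
      exact sub_pos.2 (Set.mem_Ioi.1 hx)
  have h2 : Tendsto (fun μ => (b j) ^ 2 * (μ - a j)⁻¹) (𝓝[>] (a j)) atTop :=
    (tendsto_inv_nhdsGT_zero.comp h1).const_mul_atTop (by positivity)
  have h3 := tendsto_neg_atTop_atBot.comp h2
  refine h3.congr fun μ => ?_
  show -((b j) ^ 2 * (μ - a j)⁻¹) = _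
  rw [div_eq_mul_inv, ← neg_sub μ (a j), inv_neg, mul_neg]

lemma tendsto_spike_left (a b : Fin m → ℝ) (j : Fin m) (hb : b j ≠ 0) :
    Tendsto (fun μ => (b j) ^ 2 / (a j - μ)) (𝓝[<] (a j)) atTop := by
  have h1 : Tendsto (fun μ => a j - μ) (𝓝[<] (a j)) (𝓝[>] 0) := by
    apply tendsto_nhdsWithin_of_tendsto_nhds_of_eventually_within
    · have := (continuous_sub_left (a j)).tendsto (a j)
      simpa using this.mono_left nhdsWithin_le_nhds
    · filter_upwards [self_mem_nhdsWithin] with x hx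
      exact sub_pos.2 (Set.mem_Iio.1 hx)
  have h2 : Tendsto (fun μ => (b j) ^ 2 * (a j - μ)⁻¹) (𝓝[<] (a j)) atTop :=
    (tendsto_inv_nhdsGT_zero.comp h1).const_mul_atTop (by positivity)
  refine h2.congr fun μ => ?_
  rw [div_eq_mul_inv]




lemma exists_neg_pt (a b : Fin m → ℝ) (c : ℝ) (ha : StrictMono a) (hb : ∀ i, b i ≠ 0)
    (k : Fin (m + 1)) : ∃ x ∈ Sset a k, pick a b c x < 0 := by
  rcases Nat.eq_zero_or_pos (k : ℕ) with hk | hk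
  · -- lowest interval: μ → -∞
    have hsum : Tendsto (fun μ => ∑ i : Fin m, (b i) ^ 2 / (a i - μ)) atBot (𝓝 0) := by
      have : (0:ℝ) = ∑ _i : Fin m, 0 := by simp
      rw [this]
      apply tendsto_finset_sum
      intro i _
      have h1 : Tendsto (fun μ : ℝ => a i - μ) atBot atTop :=
        tendsto_atTop_add_const_left _ _ tendsto_neg_atBot_atTop
      have h2 := tendsto_inv_atTop_zero.comp h1
      have := h2.const_mul ((b i) ^ 2)
      simpa [div_eq_mul_inv, Function.comp] using this
    have hlin : Tendsto (fun μ : ℝ => μ - c) atBot atBot :=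
      tendsto_atBot_add_const_right _ _ tendsto_id
    have ht : Tendsto (pick a b c) atBot atBot := hlin.atBot_add hsum
    have h1 : ∀ᶠ x in (atBot : Filter ℝ), pick a b c x < 0 :=
      ht.eventually (eventually_lt_atBot 0)
    have h2 : ∀ᶠ x in (atBot : Filter ℝ), ∀ i : Fin m, x < a i :=
      eventually_all.2 fun i => eventually_lt_atBot (a i)
    obtain ⟨x, hx1, hx2⟩ := (h1.and h2).exists
    exact ⟨x, ⟨fun i hi => by omega, fun i _ => hx2 i⟩, hx1⟩
  · -- interval with left endpoint a j, j = k - 1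
    have hkm : (k : ℕ) - 1 < m := by omega
    set j : Fin m := ⟨(k : ℕ) - 1, hkm⟩ with hj
    have hjv : (j : ℕ) = (k : ℕ) - 1 := rfl
    have hrest := tendsto_rest a b c j ha.injective (𝓝[>] (a j)) nhdsWithin_le_nhds
    have hspike := tendsto_spike_right a b j (hb j)
    have ht : Tendsto (pick a b c) (𝓝[>] (a j)) atBot := by
      have := hrest.add_atBot hspike
      exact this.congr fun μ => (pick_eq_rest a b c j μ).symm
    have h1 : ∀ᶠ x in 𝓝[>] (a j), pick a b c x < 0 := ht.eventually (eventually_lt_atBot 0)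
    have h2 : ∀ᶠ x in 𝓝[>] (a j), x ∈ Sset a k := by
      have hgt : ∀ᶠ x in 𝓝[>] (a j), a j < x := self_mem_nhdsWithin
      have hlt : ∀ᶠ x in 𝓝[>] (a j), ∀ i : Fin m, (k : ℕ) ≤ (i : ℕ) → x < a i := by
        rw [Filter.eventually_all]
        intro i
        by_cases hik : (k : ℕ) ≤ (i : ℕ)
        · have hji : a j < a i := ha (by rw [Fin.lt_def]; omega)
          have : Tendsto (fun x : ℝ => x) (𝓝[>] (a j)) (𝓝 (a j)) :=
            tendsto_id.mono_left nhdsWithin_le_nhds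
          filter_upwards [this.eventually_lt_const hji] with x hx _
          exact hx
        · filter_upwards with x hx; omega
      filter_upwards [hgt, hlt] with x hx1 hx2
      refine ⟨fun i hi => ?_, hx2⟩
      have : a i ≤ a j := ha.monotone (by rw [Fin.le_def]; omega)
      linarith
    obtain ⟨x, hx1, hx2⟩ := (h1.and h2).exists
    exact ⟨x, hx2, hx1⟩

lemma exists_pos_pt (a b : Fin m → ℝ) (c : ℝ) (ha : StrictMono a) (hb : ∀ i, b i ≠ 0)
    (k : Fin (m + 1)) : ∃ x ∈ Sset a k, 0 < pick a b c x := by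
  rcases eq_or_lt_of_le (Nat.lt_succ_iff.1 k.isLt) with hk | hk
  · -- top interval: μ → +∞
    have hsum : Tendsto (fun μ => ∑ i : Fin m, (b i) ^ 2 / (a i - μ)) atTop (𝓝 0) := by
      have : (0:ℝ) = ∑ _i : Fin m, 0 := by simp
      rw [this]
      apply tendsto_finset_sum
      intro i _
      have h1 : Tendsto (fun μ : ℝ => a i - μ) atTop atBot :=
        tendsto_atBot_add_const_left _ _ tendsto_neg_atTop_atBot
      have h2 := (tendsto_inv_atTop_zero (𝕜 := ℝ)).comp (tendsto_neg_atBot_atTop.comp h1)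
      have h3 := h2.const_mul ((b i) ^ 2)
      have h4 := (h3.neg)
      simp only [Function.comp_def, neg_zero, mul_zero, neg_mul] at h3 h4 ⊢
      have : Tendsto (fun μ : ℝ => -((b i) ^ 2 * (-(a i - μ))⁻¹)) atTop (𝓝 0) := by
        simpa using h4
      refine this.congr fun μ => ?_
      rw [inv_neg, mul_neg, neg_neg, div_eq_mul_inv]
    have hlin : Tendsto (fun μ : ℝ => μ - c) atTop atTop :=
      tendsto_atTop_add_const_right _ _ tendsto_id
    have ht : Tendsto (pick a b c) atTop atTop := hlin.atTop_add hsum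
    have h1 : ∀ᶠ x in (atTop : Filter ℝ), 0 < pick a b c x :=
      ht.eventually (eventually_gt_atTop 0)
    have h2 : ∀ᶠ x in (atTop : Filter ℝ), ∀ i : Fin m, a i < x :=
      eventually_all.2 fun i => eventually_gt_atTop (a i)
    obtain ⟨x, hx1, hx2⟩ := (h1.and h2).exists
    exact ⟨x, ⟨fun i _ => hx2 i, fun i hi => by omega⟩, hx1⟩
  · -- interval with right endpoint a k
    have hkm : (k : ℕ) < m := hk
    set j : Fin m := ⟨(k : ℕ), hkm⟩ with hj
    have hjv : (j : ℕ) = (k : ℕ) := rfl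
    have hrest := tendsto_rest a b c j ha.injective (𝓝[<] (a j)) nhdsWithin_le_nhds
    have hspike := tendsto_spike_left a b j (hb j)
    have ht : Tendsto (pick a b c) (𝓝[<] (a j)) atTop := by
      have := hrest.add_atTop hspike
      exact this.congr fun μ => (pick_eq_rest a b c j μ).symm
    have h1 : ∀ᶠ x in 𝓝[<] (a j), 0 < pick a b c x := ht.eventually (eventually_gt_atTop 0)
    have h2 : ∀ᶠ x in 𝓝[<] (a j), x ∈ Sset a k := by
      have hlt' : ∀ᶠ x in 𝓝[<] (a j), x < a j := eventually_mem_nhdsWithin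
      have hgt : ∀ᶠ x in 𝓝[<] (a j), ∀ i : Fin m, (i : ℕ) < (k : ℕ) → a i < x := by
        rw [Filter.eventually_all]
        intro i
        by_cases hik : (i : ℕ) < (k : ℕ)
        · have hji : a i < a j := ha (by rw [Fin.lt_def]; omega)
          have : Tendsto (fun x : ℝ => x) (𝓝[<] (a j)) (𝓝 (a j)) :=
            tendsto_id.mono_left nhdsWithin_le_nhds
          filter_upwards [this.eventually_const_lt hji] with x hx _
          exact hx
        · filter_upwards with x hx; omega
      filter_upwards [hlt', hgt] with x hx1 hx2
      refine ⟨hx2, fun i hi => ?_⟩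
      have : a j ≤ a i := ha.monotone (by rw [Fin.le_def]; omega)
      linarith
    obtain ⟨x, hx1, hx2⟩ := (h1.and h2).exists
    exact ⟨x, hx2, hx1⟩





lemma exists_root (a b : Fin m → ℝ) (c : ℝ) (ha : StrictMono a) (hb : ∀ i, b i ≠ 0)
    (k : Fin (m + 1)) : ∃ x ∈ Sset a k, pick a b c x = 0 := by
  obtain ⟨x0, hx0S, hx0⟩ := exists_neg_pt a b c ha hb k
  obtain ⟨x1, hx1S, hx1⟩ := exists_pos_pt a b c ha hb k
  have hx01 : x0 < x1 := by
    rcases lt_trichotomy x0 x1 with h | h | h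
    · exact h
    · exact absurd (h ▸ hx0) (by linarith)
    · have := strictMonoOn_pick a b c k hx1S hx0S h
      linarith
  have hsub : Set.Icc x0 x1 ⊆ Sset a k := fun z hz =>
    ⟨fun i hi => lt_of_lt_of_le (hx0S.1 i hi) hz.1, fun i hi => lt_of_le_of_lt hz.2 (hx1S.2 i hi)⟩
  have hc : ContinuousOn (pick a b c) (Set.Icc x0 x1) :=
    (continuousOn_pick a b c).mono (fun z hz i => ne_of_mem_Sset (hsub hz) i)
  have := intermediate_value_Icc hx01.le hc
  have h0 : (0:ℝ) ∈ Set.Icc (pick a b c x0) (pick a b c x1) := ⟨hx0.le, hx1.le⟩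
  obtain ⟨x, hxI, hx⟩ := this h0
  exact ⟨x, hsub hxI, hx⟩

/-- the root in each interval is unique -/
lemma root_unique {a b : Fin m → ℝ} {c : ℝ} {k : Fin (m + 1)} {x y : ℝ}
    (hx : x ∈ Sset a k) (hy : y ∈ Sset a k)
    (hx0 : pick a b c x = 0) (hy0 : pick a b c y = 0) : x = y :=
  (strictMonoOn_pick a b c k).injOn hx hy (by rw [hx0, hy0])

/-- every real  not among the `a i` lies in some `Sset a k` -/
lemma mem_Sset_of_ne (a : Fin m → ℝ) (ha : StrictMono a) {μ : ℝ} (hμ : ∀ i, μ ≠ a i) :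
    ∃ k : Fin (m + 1), μ ∈ Sset a k := by
  classical
  set T : Finset (Fin m) := univ.filter (fun i => a i < μ) with hT
  have hcard : T.card ≤ m := by
    simpa using card_filter_le univ (fun i => a i < μ)
  refine ⟨⟨T.card, Nat.lt_succ_of_le hcard⟩, ?_, ?_⟩
  · intro i hi
    by_contra hcon
    push_neg at hcon
    have hne := hμ i
    have hmi : μ < a i := lt_of_le_of_ne hcon (hμ i)
    have hsub : T ⊆ Finset.Iio i := by
      intro x hx
      rw [Finset.mem_Iio]
      rw [hT, Finset.mem_filter] at hx
      by_contra hxi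
      push_neg at hxi
      have : a i ≤ a x := ha.monotone hxi
      linarith [hx.2]
    have := Finset.card_le_card hsub
    rw [Fin.card_Iio] at this
    simp only at hi
    omega
  · intro i hi
    by_contra hcon
    push_neg at hcon
    have hai : a i < μ := lt_of_le_of_ne hcon (fun h => hμ i h.symm)
    have hsub : Finset.Iic i ⊆ T := by
      intro x hx
      rw [Finset.mem_Iic] at hx
      rw [hT, Finset.mem_filter]
      exact ⟨mem_univ x, lt_of_le_of_lt (ha.monotone hx) hai⟩
    have := Finset.card_le_card hsub
    rw [Fin.card_Iic] at this
    simp only at hi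
    omega





noncomputable def gfun (a b : Fin m → ℝ) (c : ℝ) (μ : ℝ) : ℝ :=
  (μ - c) * ∏ i, (a i - μ) + ∑ i, (b i) ^ 2 * ∏ j ∈ univ.erase i, (a j - μ)

lemma finSumFinEquiv_symm_lt {i : Fin (m + 1)} (h : (i : ℕ) < m) :
    finSumFinEquiv.symm i = Sum.inl (⟨i, h⟩ : Fin m) := by
  rw [Equiv.symm_apply_eq, finSumFinEquiv_apply_left]
  ext
  simp [Fin.castAdd]

lemma finSumFinEquiv_symm_ge {i : Fin (m + 1)} (h : ¬ (i : ℕ) < m) :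
    finSumFinEquiv.symm i = Sum.inr (0 : Fin 1) := by
  rw [Equiv.symm_apply_eq, finSumFinEquiv_apply_right]
  ext
  simp only [Fin.natAdd]
  omega

lemma arrowhead_sub_eq (a b : Fin m → ℝ) (c : ℝ) (μ : ℝ) :
    arrowhead m a b c - μ • (1 : Matrix (Fin (m + 1)) (Fin (m + 1)) ℝ) =
      (Matrix.fromBlocks (Matrix.diagonal (fun i => a i - μ))
        (Matrix.of fun i (_ : Fin 1) => b i)
        (Matrix.of fun (_ : Fin 1) j => b j)
        (Matrix.of fun _ _ => c - μ)).submatrix finSumFinEquiv.symm finSumFinEquiv.symm := by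
  ext i j
  simp only [Matrix.sub_apply, Matrix.smul_apply, Matrix.one_apply, Matrix.submatrix_apply,
    smul_eq_mul, mul_ite, mul_one, mul_zero]
  by_cases hi : (i : ℕ) < m <;> by_cases hj : (j : ℕ) < m
  · rw [finSumFinEquiv_symm_lt hi, finSumFinEquiv_symm_lt hj]
    simp only [arrowhead, Matrix.of_apply, hi, hj, dif_pos, Matrix.fromBlocks_apply₁₁,
      Matrix.diagonal_apply]
    have : (i = j) ↔ ((⟨(i:ℕ), hi⟩ : Fin m) = ⟨(j:ℕ), hj⟩) := by
      rw [Fin.ext_iff, Fin.ext_iff]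
    by_cases h : i = j
    · simp [h, this.1 h]
    · have hvv : ¬ (i : ℕ) = (j : ℕ) := fun hh => h (Fin.ext hh)
      simp [h, hvv]
  · rw [finSumFinEquiv_symm_lt hi, finSumFinEquiv_symm_ge hj]
    have hij : i ≠ j := by intro h; rw [h] at hi; exact hj hi
    simp [arrowhead, hi, hj, hij]
  · rw [finSumFinEquiv_symm_ge hi, finSumFinEquiv_symm_lt hj]
    have hij : i ≠ j := by intro h; rw [h] at hi; exact hi hj
    simp [arrowhead, hi, hj, hij]
  · rw [finSumFinEquiv_symm_ge hi, finSumFinEquiv_symm_ge hj]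
    have hij : i = j := by
      have h1 := i.isLt; have h2 := j.isLt
      ext; omega
    simp [arrowhead, hi, hj, hij]

lemma det_arrowhead_sub_of_ne (a b : Fin m → ℝ) (c : ℝ) (μ : ℝ) (hμ : ∀ i, a i ≠ μ) :
    (arrowhead m a b c - μ • (1 : Matrix (Fin (m + 1)) (Fin (m + 1)) ℝ)).det
      = - gfun a b c μ := by
  have hne : ∀ i, a i - μ ≠ 0 := fun i => sub_ne_zero.2 (hμ i)
  rw [arrowhead_sub_eq, Matrix.det_submatrix_equiv_self]
  have hdet : (Matrix.diagonal (fun i => a i - μ)).det = ∏ i, (a i - μ) :=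
    Matrix.det_diagonal
  have hunit : IsUnit (Matrix.diagonal (fun i => a i - μ)).det := by
    rw [hdet, isUnit_iff_ne_zero]
    exact Finset.prod_ne_zero_iff.2 fun i _ => hne i
  have : Invertible (Matrix.diagonal (fun i => a i - μ)) :=
    Matrix.invertibleOfIsUnitDet _ hunit
  have hinv : (Matrix.diagonal (fun i => a i - μ))⁻¹
      = Matrix.diagonal (fun i => (a i - μ)⁻¹) := by
    apply Matrix.inv_eq_right_inv
    rw [Matrix.diagonal_mul_diagonal]
    have hfun : (fun i => (a i - μ) * (a i - μ)⁻¹) = fun _ => (1 : ℝ) :=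
      funext fun i => mul_inv_cancel₀ (hne i)
    rw [hfun, Matrix.diagonal_one]
  rw [Matrix.det_fromBlocks₁₁, invOf_eq_nonsing_inv, hinv, hdet, Matrix.det_fin_one]
  have hentry : (Matrix.of (fun (_ : Fin 1) (_ : Fin 1) => c - μ) -
      Matrix.of (fun (_ : Fin 1) j => b j) * Matrix.diagonal (fun i => (a i - μ)⁻¹) *
        Matrix.of (fun i (_ : Fin 1) => b i)) 0 0
      = (c - μ) - ∑ i, b i * (a i - μ)⁻¹ * b i := by
    simp only [Matrix.sub_apply, Matrix.of_apply]
    congr 1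
    rw [Matrix.mul_apply]
    simp only [Matrix.mul_diagonal, Matrix.of_apply]
  rw [hentry]
  unfold gfun
  rw [mul_sub, Finset.mul_sum]
  have hterm : ∀ i : Fin m, (∏ j, (a j - μ)) * (b i * (a i - μ)⁻¹ * b i)
      = (b i) ^ 2 * ∏ j ∈ univ.erase i, (a j - μ) := by
    intro i
    rw [← Finset.mul_prod_erase _ _ (mem_univ i)]
    calc ((a i - μ) * ∏ j ∈ univ.erase i, (a j - μ)) * (b i * (a i - μ)⁻¹ * b i)
        = ((a i - μ) * (a i - μ)⁻¹) * ((b i) ^ 2 * ∏ j ∈ univ.erase i, (a j - μ)) := by ring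
      _ = (b i) ^ 2 * ∏ j ∈ univ.erase i, (a j - μ) := by
          rw [mul_inv_cancel₀ (hne i), one_mul]
  rw [Finset.sum_congr rfl fun i _ => hterm i]
  ring




lemma gfun_eq_pick_mul (a b : Fin m → ℝ) (c μ : ℝ) (hμ : ∀ i, a i ≠ μ) :
    gfun a b c μ = pick a b c μ * ∏ i, (a i - μ) := by
  have hne : ∀ i, a i - μ ≠ 0 := fun i => sub_ne_zero.2 (hμ i)
  unfold gfun pick
  rw [add_mul, Finset.sum_mul]
  congr 1
  refine Finset.sum_congr rfl fun i _ => ?_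
  rw [← Finset.mul_prod_erase _ _ (mem_univ i), div_eq_mul_inv]
  have h1 : (b i) ^ 2 * (a i - μ)⁻¹ * ((a i - μ) * ∏ j ∈ univ.erase i, (a j - μ))
      = ((a i - μ) * (a i - μ)⁻¹) * ((b i) ^ 2 * ∏ j ∈ univ.erase i, (a j - μ)) := by ring
  rw [h1, mul_inv_cancel₀ (hne i), one_mul]

lemma gfun_at (a b : Fin m → ℝ) (c : ℝ) (j : Fin m) :
    gfun a b c (a j) = (b j) ^ 2 * ∏ i ∈ univ.erase j, (a i - a j) := by
  unfold gfun
  have h1 : ∏ i, (a i - a j) = 0 := Finset.prod_eq_zero (mem_univ j) (sub_self _)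
  rw [h1, mul_zero, zero_add]
  rw [Finset.sum_eq_single j]
  · intro i _ hij
    have h2 : ∏ l ∈ univ.erase i, (a l - a j) = 0 :=
      Finset.prod_eq_zero (Finset.mem_erase.2 ⟨fun h => hij h.symm, mem_univ j⟩) (sub_self _)
    rw [h2, mul_zero]
  · intro h; exact absurd (mem_univ j) h

lemma gfun_at_ne_zero (a b : Fin m → ℝ) (c : ℝ) (ha : Function.Injective a)
    (hb : ∀ i, b i ≠ 0) (j : Fin m) : gfun a b c (a j) ≠ 0 := by
  rw [gfun_at]
  apply mul_ne_zero (pow_ne_zero _ (hb j))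
  exact Finset.prod_ne_zero_iff.2 fun i hi =>
    sub_ne_zero.2 fun h => (Finset.mem_erase.1 hi).1 (ha h)

noncomputable def detP (a b : Fin m → ℝ) (c : ℝ) : ℝ[X] :=
  ((arrowhead m a b c).map Polynomial.C
    - (X : ℝ[X]) • (1 : Matrix (Fin (m + 1)) (Fin (m + 1)) ℝ[X])).det

lemma eval_detP (a b : Fin m → ℝ) (c μ : ℝ) :
    (detP a b c).eval μ
      = (arrowhead m a b c - μ • (1 : Matrix (Fin (m + 1)) (Fin (m + 1)) ℝ)).det := by
  unfold detP
  rw [← Polynomial.coe_evalRingHom, RingHom.map_det]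
  congr 1
  ext i j
  by_cases h : i = j <;>
    simp [Matrix.map_apply, Matrix.sub_apply, Matrix.smul_apply, Matrix.one_apply, h,
      smul_eq_mul]

noncomputable def gP (a b : Fin m → ℝ) (c : ℝ) : ℝ[X] :=
  -((X - C c) * ∏ i, (C (a i) - X) + ∑ i, C ((b i) ^ 2) * ∏ j ∈ univ.erase i, (C (a j) - X))

lemma eval_gP (a b : Fin m → ℝ) (c μ : ℝ) : (gP a b c).eval μ = - gfun a b c μ := by
  unfold gP gfun
  simp [eval_prod, eval_finset_sum]

lemma detP_eq_gP (a b : Fin m → ℝ) (c : ℝ) : detP a b c = gP a b c := by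
  have h : Set.Infinite {x : ℝ | ∀ i, a i ≠ x} := by
    have heq : {x : ℝ | ∀ i, a i ≠ x} = (Set.range a)ᶜ := by
      ext x
      simp only [Set.mem_setOf_eq, Set.mem_compl_iff, Set.mem_range, not_exists]
    rw [heq]
    exact (Set.finite_range a).infinite_compl
  have hsub : {x : ℝ | ∀ i, a i ≠ x} ⊆ {x | (detP a b c - gP a b c).IsRoot x} := by
    intro x hx
    simp only [Set.mem_setOf_eq, IsRoot, eval_sub, eval_detP, eval_gP]
    rw [det_arrowhead_sub_of_ne a b c x hx]
    ring
  have := Polynomial.eq_zero_of_infinite_isRoot _ (h.mono hsub)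
  exact sub_eq_zero.1 this

lemma det_arrowhead_sub (a b : Fin m → ℝ) (c μ : ℝ) :
    (arrowhead m a b c - μ • (1 : Matrix (Fin (m + 1)) (Fin (m + 1)) ℝ)).det
      = - gfun a b c μ := by
  rw [← eval_detP, detP_eq_gP, eval_gP]


end ArrowheadAux

/-- for a symmetric arrowhead matrix with strictly increasing shaft and
nonzero spike, the Pick function `f(λ) = λ - c + ∑ bᵢ²/(aᵢ-λ)` has exactly `n` roots,
strictly interlacing the shaft entries, and these are precisely the eigenvalues. -/
theorem arrowhead_pick_roots_interlace (m : ℕ) (a b : Fin m → ℝ) (c : ℝ)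
    (ha : StrictMono a) (hb : ∀ i, b i ≠ 0) :
    ∃ lam : Fin (m + 1) → ℝ, StrictMono lam ∧
      (∀ i : Fin m, lam i.castSucc < a i ∧ a i < lam i.succ) ∧
      (∀ μ : ℝ, (∀ i, μ ≠ a i) →
        (μ - c + ∑ i, (b i) ^ 2 / (a i - μ) = 0 ↔ ∃ k, μ = lam k)) ∧
      (∀ μ : ℝ,
        (arrowhead m a b c - μ • (1 : Matrix (Fin (m + 1)) (Fin (m + 1)) ℝ)).det = 0 ↔
          ∃ k, μ = lam k) := by
  classical
  open ArrowheadAux in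
  have hroot : ∀ k : Fin (m + 1), ∃ x ∈ Sset a k, pick a b c x = 0 :=
    ArrowheadAux.exists_root a b c ha hb
  choose lam hlamS hlam0 using hroot
  have hmono : StrictMono lam := by
    intro k l hkl
    have hk : (k : ℕ) < m := by
      have := l.isLt
      have : (k : ℕ) < (l : ℕ) := hkl
      omega
    set i : Fin m := ⟨(k : ℕ), hk⟩ with hi
    have h1 : lam k < a i := (hlamS k).2 i (le_refl _)
    have h2 : a i < lam l := (hlamS l).1 i hkl
    linarith
  refine ⟨lam, hmono, ?_, ?_, ?_⟩
  · intro i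
    constructor
    · exact (hlamS i.castSucc).2 i (by simp)
    · exact (hlamS i.succ).1 i (by simp)
  · intro μ hμ
    constructor
    · intro h0
      obtain ⟨k, hk⟩ := ArrowheadAux.mem_Sset_of_ne a ha hμ
      exact ⟨k, ArrowheadAux.root_unique hk (hlamS k) h0 (hlam0 k)⟩
    · rintro ⟨k, rfl⟩
      exact hlam0 k
  · intro μ
    rw [ArrowheadAux.det_arrowhead_sub, neg_eq_zero]
    by_cases h : ∀ i, μ ≠ a i
    · have hμ' : ∀ i, a i ≠ μ := fun i hh => h i hh.symm
      rw [ArrowheadAux.gfun_eq_pick_mul a b c μ hμ']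
      have hprod : (∏ i, (a i - μ)) ≠ 0 :=
        Finset.prod_ne_zero_iff.2 fun i _ => sub_ne_zero.2 (hμ' i)
      constructor
      · intro hd
        rcases mul_eq_zero.1 hd with hp | hp
        · obtain ⟨k, hk⟩ := ArrowheadAux.mem_Sset_of_ne a ha h
          exact ⟨k, ArrowheadAux.root_unique hk (hlamS k) hp (hlam0 k)⟩
        · exact absurd hp hprod
      · rintro ⟨k, rfl⟩
        rw [hlam0 k, zero_mul]
    · push_neg at h
      obtain ⟨j, rfl⟩ := h
      constructor
      · intro hd
        exact absurd hd (ArrowheadAux.gfun_at_ne_zero a b c ha.injective hb j)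
      · rintro ⟨k, hk⟩
        exact absurd hk.symm (ArrowheadAux.ne_of_mem_Sset (hlamS k) j).symm
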